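/- Let γ ∈ (0, 1/2), K ≥ 0, M ≥ 0, T > 0, and let b : ℝ → ℝ be twice differentiable with |b′(x)| ≤ K(1+|x|)^{−γ} and |b″(x)| ≤ M for all x. Set c₁ = K/(1−γ), c₂ = K|b(0)| + M/2, c₃ = K²/(1−γ), and β′(x) = b(x)b′(x) + b″(x)/2. Then for every continuous function X : [0,T] → ℝ, writing Ψ = ∫₀^T X(s)² ds + X(T)², one has ∫₀^T β′(X(s))² ds + b(X(T))² ≤ 2(b(0)² + (c₂² + 2c₃²)T) + 4c₃²·T^{2γ}·Ψ^{1−2γ} + 2c₁²·Ψ^{1−γ}. -/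

import Mathlib

open Real MeasureTheory intervalIntegral

/-- `(1+t)^p ≤ 1 + t^p` for `0 ≤ t`, `0 ≤ p ≤ 1`. -/
private lemma one_add_rpow_le {t p : ℝ} (ht : 0 ≤ t) (hp0 : 0 ≤ p) (hp1 : p ≤ 1) :
    (1 + t) ^ p ≤ 1 + t ^ p := by
  have h := NNReal.rpow_add_le_add_rpow 1 t.toNNReal hp0 hp1
  have h2 := (NNReal.coe_le_coe).2 h
  simpa [NNReal.coe_rpow, Real.coe_toNNReal t ht] using h2

/-- tangent line inequality for concave rpow. -/
private lemma tangent_rpow {a lam θ : ℝ} (ha : 0 ≤ a) (hlam : 0 < lam)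
    (hθ0 : 0 ≤ θ) (hθ1 : θ ≤ 1) :
    a ^ θ ≤ θ * lam ^ (θ - 1) * a + (1 - θ) * lam ^ θ := by
  have h := Real.geom_mean_le_arith_mean2_weighted hθ0 (show (0:ℝ) ≤ 1 - θ by linarith) ha hlam.le (show θ + (1 - θ) = 1 by ring)
  have hl : (0:ℝ) < lam ^ (1 - θ) := Real.rpow_pos_of_pos hlam _
  have key : a ^ θ ≤ (θ * a + (1 - θ) * lam) * (lam ^ (1 - θ))⁻¹ := by
    rw [le_mul_inv_iff₀ hl]
    exact h
  have h1 : lam ^ (θ - 1) = (lam ^ (1 - θ))⁻¹ := by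
    rw [← Real.rpow_neg hlam.le]; ring_nf
  have h2 : lam ^ (θ - 1) * lam = lam ^ θ := by
    rw [← Real.rpow_add_one hlam.ne']; ring_nf
  calc a ^ θ ≤ (θ * a + (1 - θ) * lam) * (lam ^ (1 - θ))⁻¹ := key
    _ = θ * lam ^ (θ - 1) * a + (1 - θ) * (lam ^ (θ - 1) * lam) := by rw [h1]; ring
    _ = θ * lam ^ (θ - 1) * a + (1 - θ) * lam ^ θ := by rw [h2]

private lemma bgrow_nonneg {γ K : ℝ} (hγ₀ : 0 < γ) (hγ₁ : γ < 1) (hK : 0 ≤ K)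
    {b : ℝ → ℝ} (hb : Differentiable ℝ b) (hb' : Continuous (deriv b))
    (hbd : ∀ x, |deriv b x| ≤ K * (1 + |x|) ^ (-γ)) {x : ℝ} (hx : 0 ≤ x) :
    |b x - b 0| ≤ K / (1 - γ) * ((1 + x) ^ (1 - γ) - 1) := by
  have hFTC : (∫ t in (0:ℝ)..x, deriv b t) = b x - b 0 :=
    intervalIntegral.integral_deriv_eq_sub (fun t _ => hb t)
      (hb'.intervalIntegrable 0 x)
  rw [← hFTC]
  have hg_int : IntervalIntegrable (fun t => K * (1 + t) ^ (-γ)) volume 0 x := by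
    apply ContinuousOn.intervalIntegrable
    apply ContinuousOn.mul continuousOn_const
    apply ContinuousOn.rpow_const (by fun_prop)
    intro t ht
    rw [Set.uIcc_of_le hx] at ht
    left; nlinarith [ht.1]
  calc |∫ t in (0:ℝ)..x, deriv b t| ≤ ∫ t in (0:ℝ)..x, |deriv b t| :=
        intervalIntegral.abs_integral_le_integral_abs hx
    _ ≤ ∫ t in (0:ℝ)..x, K * (1 + t) ^ (-γ) := by
        apply intervalIntegral.integral_mono_on hx (hb'.abs.intervalIntegrable 0 x) hg_int
        intro t ht
        have h1 : |t| = t := abs_of_nonneg ht.1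
        have := hbd t
        rwa [h1] at this
    _ = K * ∫ t in (0:ℝ)..x, (1 + t) ^ (-γ) := intervalIntegral.integral_const_mul _ _
    _ = K * ∫ u in (1:ℝ)..(1+x), u ^ (-γ) := by
        rw [intervalIntegral.integral_comp_add_left (fun u => u ^ (-γ)) 1]
        norm_num
    _ = K * (((1+x) ^ (-γ+1) - 1 ^ (-γ+1)) / (-γ+1)) := by
        rw [integral_rpow (Or.inl (by linarith))]
    _ = K / (1 - γ) * ((1 + x) ^ (1 - γ) - 1) := by
        rw [Real.one_rpow, show -γ+1 = 1-γ by ring]; ring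

private lemma bgrow {γ K : ℝ} (hγ₀ : 0 < γ) (hγ₁ : γ < 1) (hK : 0 ≤ K)
    {b : ℝ → ℝ} (hb : Differentiable ℝ b) (hb' : Continuous (deriv b))
    (hbd : ∀ x, |deriv b x| ≤ K * (1 + |x|) ^ (-γ)) (x : ℝ) :
    |b x| ≤ |b 0| + K / (1 - γ) * |x| ^ (1 - γ) := by
  have hc₁ : 0 ≤ K / (1 - γ) := div_nonneg hK (by linarith)
  have key : |b x - b 0| ≤ K / (1 - γ) * ((1 + |x|) ^ (1 - γ) - 1) := by
    rcases le_or_gt 0 x with hx | hx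
    · rw [abs_of_nonneg hx]
      exact bgrow_nonneg hγ₀ hγ₁ hK hb hb' hbd hx
    · set c : ℝ → ℝ := fun y => b (-y) with hc
      have hcd : Differentiable ℝ c := hb.comp differentiable_neg
      have hcderiv : ∀ y, deriv c y = -deriv b (-y) := fun y => deriv_comp_neg b y
      have hc' : Continuous (deriv c) := by
        have : deriv c = fun y => -deriv b (-y) := funext hcderiv
        rw [this]; exact (hb'.comp continuous_neg).neg
      have hcbd : ∀ y, |deriv c y| ≤ K * (1 + |y|) ^ (-γ) := by
        intro y
        rw [hcderiv, abs_neg]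
        simpa using hbd (-y)
      have h := bgrow_nonneg hγ₀ hγ₁ hK hcd hc' hcbd (x := -x) (by linarith)
      have h0 : c (-x) = b x := by simp [hc]
      have h1 : c 0 = b 0 := by simp [hc]
      rw [h0, h1] at h
      rw [abs_of_neg hx]; exact h
  have hsub : (1 + |x|) ^ (1 - γ) ≤ 1 + |x| ^ (1 - γ) :=
    one_add_rpow_le (abs_nonneg x) (by linarith) (by linarith)
  have : |b x| - |b 0| ≤ |b x - b 0| := abs_sub_abs_le_abs_sub _ _
  have h2 : K / (1 - γ) * ((1 + |x|) ^ (1 - γ) - 1) ≤ K / (1 - γ) * (|x| ^ (1 - γ)) := by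
    apply mul_le_mul_of_nonneg_left (by linarith) hc₁
  linarith


private lemma sq_rpow (x p : ℝ) : (|x| ^ p) ^ (2:ℕ) = ((x ^ 2 : ℝ)) ^ p := by
  rw [← Real.rpow_natCast (|x| ^ p) 2, ← Real.rpow_mul (abs_nonneg x),
      ← sq_abs x, ← Real.rpow_natCast |x| 2, ← Real.rpow_mul (abs_nonneg x)]
  ring_nf

set_option maxHeartbeats 1600000 in
/-- **Quadratic pathwise bound on the Girsanov drift terms.**
For `γ ∈ (0, 1/2)`, `b` twice differentiable with `|b′| ≤ K(1+|x|)^{−γ}`, `|b″| ≤ M`,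
`c₁ = K/(1−γ)`, `c₂ = K|b(0)| + M/2`, `c₃ = K²/(1−γ)`, `β′ = b b′ + b″/2`, and any
continuous `X : [0,T] → ℝ`, with `Ψ = ∫₀^T X(s)² ds + X(T)²`:
`∫₀^T β′(X s)² ds + b(X T)² ≤ 2(b(0)² + (c₂² + 2c₃²)T) + 4c₃² T^{2γ} Ψ^{1−2γ} + 2c₁² Ψ^{1−γ}`. -/
theorem girsanov_drift_square_bound (γ K M T : ℝ)
    (hγ₀ : 0 < γ) (hγ₁ : γ < 1 / 2) (hK : 0 ≤ K) (hM : 0 ≤ M) (hT : 0 < T)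
    (b : ℝ → ℝ) (hb : Differentiable ℝ b) (hb' : Differentiable ℝ (deriv b))
    (hbd : ∀ x : ℝ, |deriv b x| ≤ K * (1 + |x|) ^ (-γ))
    (hbd2 : ∀ x : ℝ, |deriv (deriv b) x| ≤ M)
    (c₁ c₂ c₃ : ℝ) (hc₁ : c₁ = K / (1 - γ)) (hc₂ : c₂ = K * |b 0| + M / 2)
    (hc₃ : c₃ = K ^ 2 / (1 - γ))
    (β' : ℝ → ℝ) (hβ' : ∀ x : ℝ, β' x = b x * deriv b x + deriv (deriv b) x / 2)
    (X : ℝ → ℝ) (hX : ContinuousOn X (Set.Icc 0 T))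
    (Ψ : ℝ) (hΨ : Ψ = (∫ s in (0:ℝ)..T, (X s) ^ 2) + (X T) ^ 2) :
    (∫ s in (0:ℝ)..T, (β' (X s)) ^ 2) + (b (X T)) ^ 2 ≤
      2 * ((b 0) ^ 2 + (c₂ ^ 2 + 2 * c₃ ^ 2) * T) +
        4 * c₃ ^ 2 * T ^ (2 * γ) * Ψ ^ (1 - 2 * γ) + 2 * c₁ ^ 2 * Ψ ^ (1 - γ) := by
  have hγ1 : γ < 1 := by linarith
  have h1γ : 0 < 1 - γ := by linarith
  have hθpos : 0 < 1 - 2*γ := by linarith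
  set θ := 1 - 2*γ with hθdef
  have hb'c : Continuous (deriv b) := hb'.continuous
  have hc₁nn : 0 ≤ c₁ := by rw [hc₁]; positivity
  have hc₂nn : 0 ≤ c₂ := by rw [hc₂]; positivity
  have hc₃nn : 0 ≤ c₃ := by rw [hc₃]; positivity
  have hbound : ∀ x, |b x| ≤ |b 0| + c₁ * |x| ^ (1 - γ) := by
    intro x; rw [hc₁]; exact bgrow hγ₀ hγ1 hK hb hb'c hbd x
  -- pointwise bound on β'
  have hβb : ∀ x : ℝ, |β' x| ≤ c₂ + c₃ * |x| ^ θ := by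
    intro x
    rw [hβ' x]
    have hd2 : |deriv (deriv b) x / 2| ≤ M / 2 := by
      rw [abs_div, abs_two]
      gcongr
      exact hbd2 x
    have h1 : |b x * deriv b x + deriv (deriv b) x / 2| ≤ |b x| * |deriv b x| + M/2 := by
      calc |b x * deriv b x + deriv (deriv b) x / 2|
          ≤ |b x * deriv b x| + |deriv (deriv b) x / 2| := abs_add_le _ _
        _ ≤ |b x| * |deriv b x| + M/2 := by rw [abs_mul]; linarith
    have h2 : |b x| * |deriv b x| ≤ (|b 0| + c₁ * |x| ^ (1-γ)) * (K * (1+|x|) ^ (-γ)) :=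
      mul_le_mul (hbound x) (hbd x) (abs_nonneg _)
        (by positivity)
    have h3 : (1+|x|) ^ (-γ) ≤ 1 :=
      Real.rpow_le_one_of_one_le_of_nonpos (by linarith [abs_nonneg x]) (by linarith)
    have h4 : |x| ^ (1-γ) * (1+|x|) ^ (-γ) ≤ |x| ^ θ := by
      rcases eq_or_ne x 0 with rfl | hx
      · simp [Real.zero_rpow h1γ.ne', Real.zero_rpow hθpos.ne']
      · have hxpos : 0 < |x| := abs_pos.2 hx
        have hle : (1+|x|) ^ (-γ) ≤ |x| ^ (-γ) :=
          Real.rpow_le_rpow_of_nonpos hxpos (by linarith) (by linarith)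
        calc |x| ^ (1-γ) * (1+|x|) ^ (-γ) ≤ |x| ^ (1-γ) * |x| ^ (-γ) := by
              apply mul_le_mul_of_nonneg_left hle (Real.rpow_nonneg (abs_nonneg x) _)
          _ = |x| ^ θ := by
              rw [← Real.rpow_add hxpos, hθdef]; ring_nf
    have hc₁K : c₁ * K = c₃ := by rw [hc₁, hc₃]; field_simp
    have hb0γ : K * |b 0| * (1+|x|) ^ (-γ) ≤ K * |b 0| := by
      have : 0 ≤ K * |b 0| := by positivity
      nlinarith [Real.rpow_nonneg (by positivity : (0:ℝ) ≤ 1 + |x|) (-γ)]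
    have hmul2 : c₁ * K * (|x| ^ (1-γ) * (1+|x|) ^ (-γ)) ≤ c₃ * |x| ^ θ := by
      rw [hc₁K]
      exact mul_le_mul_of_nonneg_left h4 hc₃nn
    have hexp : (|b 0| + c₁ * |x| ^ (1-γ)) * (K * (1+|x|) ^ (-γ))
        = K * |b 0| * (1+|x|) ^ (-γ) + c₁ * K * (|x| ^ (1-γ) * (1+|x|) ^ (-γ)) := by ring
    rw [hexp] at h2
    rw [hc₂]
    linarith
  -- squared pointwise bound
  have hβsq : ∀ x : ℝ, (β' x)^2 ≤ 2*c₂^2 + 2*c₃^2 * ((x^2 : ℝ)) ^ θ := by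
    intro x
    have h := hβb x
    have habs : 0 ≤ |x| ^ θ := Real.rpow_nonneg (abs_nonneg x) _
    have hrw : ((x^2 : ℝ)) ^ θ = (|x| ^ θ)^(2:ℕ) := (sq_rpow x θ).symm
    have h0 : (β' x)^2 = |β' x|^2 := (sq_abs _).symm
    rw [hrw, h0]
    nlinarith [abs_nonneg (β' x), mul_nonneg hc₃nn habs, sq_nonneg (c₂ - c₃ * |x| ^ θ)]
  -- integrability
  have huIcc : Set.uIcc (0:ℝ) T = Set.Icc 0 T := Set.uIcc_of_le hT.le
  have hXI : ContinuousOn X (Set.uIcc 0 T) := huIcc ▸ hX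
  have hX2 : IntervalIntegrable (fun s => (X s)^2) volume 0 T := (hXI.pow 2).intervalIntegrable
  have hXθ : IntervalIntegrable (fun s => ((X s)^2 : ℝ) ^ θ) volume 0 T :=
    (ContinuousOn.rpow_const (hXI.pow 2) (fun s _ => Or.inr hθpos.le)).intervalIntegrable
  have hg : IntervalIntegrable (fun s => 2*c₂^2 + 2*c₃^2 * ((X s)^2 : ℝ) ^ θ) volume 0 T :=
    intervalIntegrable_const.add (hXθ.const_mul _)
  have hXaem : AEMeasurable X (volume.restrict (Set.uIoc 0 T)) := by
    have hsub : Set.uIoc (0:ℝ) T ⊆ Set.Icc 0 T := by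
      rw [Set.uIoc_of_le hT.le]; exact Set.Ioc_subset_Icc_self
    exact ((hX.mono hsub).aemeasurable measurableSet_uIoc)
  have hmeas : AEStronglyMeasurable (fun s => (β' (X s))^2)
      (volume.restrict (Set.uIoc 0 T)) := by
    have h1 : AEMeasurable (fun s => b (X s)) (volume.restrict (Set.uIoc 0 T)) :=
      hb.continuous.measurable.comp_aemeasurable hXaem
    have h2 : AEMeasurable (fun s => deriv b (X s)) (volume.restrict (Set.uIoc 0 T)) :=
      hb'c.measurable.comp_aemeasurable hXaem
    have h3 : AEMeasurable (fun s => deriv (deriv b) (X s)) (volume.restrict (Set.uIoc 0 T)) :=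
      (measurable_deriv _).comp_aemeasurable hXaem
    have h4 : AEMeasurable (fun s => β' (X s)) (volume.restrict (Set.uIoc 0 T)) := by
      have he : (fun s => β' (X s))
          = fun s => b (X s) * deriv b (X s) + deriv (deriv b) (X s) / 2 :=
        funext fun s => hβ' _
      rw [he]
      exact (h1.mul h2).add (h3.div_const 2)
    exact ((h4.mul h4).congr (by filter_upwards with s; rw [sq]; rfl)).aestronglyMeasurable
  have hf : IntervalIntegrable (fun s => (β' (X s))^2) volume 0 T := by
    apply hg.mono_fun hmeas
    filter_upwards with s
    rw [Real.norm_eq_abs, Real.norm_eq_abs]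
    have h1 := hβsq (X s)
    have hnn : (0:ℝ) ≤ (β' (X s))^2 := sq_nonneg _
    have hnn2 : (0:ℝ) ≤ 2*c₂^2 + 2*c₃^2 * ((X s)^2 : ℝ) ^ θ := by positivity
    rw [abs_of_nonneg hnn, abs_of_nonneg hnn2]; exact h1
  -- main estimates
  set A := ∫ s in (0:ℝ)..T, (X s)^2 with hAdef
  have hAnn : 0 ≤ A := intervalIntegral.integral_nonneg hT.le (fun u _ => sq_nonneg _)
  have hΨnn : 0 ≤ Ψ := by rw [hΨ]; nlinarith [sq_nonneg (X T)]
  have hAΨ : A ≤ Ψ := by rw [hΨ]; nlinarith [sq_nonneg (X T)]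
  have hJ : (∫ s in (0:ℝ)..T, ((X s)^2 : ℝ) ^ θ) ≤ T ^ (2*γ) * Ψ ^ θ := by
    rcases eq_or_lt_of_le hAnn with hA0 | hApos
    · have hioc : ∀ᵐ s ∂(volume.restrict (Set.Ioc (0:ℝ) T)), (X s)^2 = 0 := by
        have hInt : IntegrableOn (fun s => (X s)^2) (Set.Ioc (0:ℝ) T) := hX2.1
        have hz : ∫ s in Set.Ioc (0:ℝ) T, (X s)^2 ∂volume = 0 := by
          rw [← intervalIntegral.integral_of_le hT.le]; exact hA0.symm
        exact (MeasureTheory.integral_eq_zero_iff_of_nonneg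
          (fun s => sq_nonneg (X s)) hInt).1 hz
      have hzero : (∫ s in (0:ℝ)..T, ((X s)^2 : ℝ) ^ θ) = 0 := by
        rw [intervalIntegral.integral_of_le hT.le]
        apply MeasureTheory.integral_eq_zero_of_ae
        filter_upwards [hioc] with s hs
        simp [hs, Real.zero_rpow hθpos.ne']
      rw [hzero]; positivity
    · set lam := A / T with hlam
      have hlampos : 0 < lam := div_pos hApos hT
      have step : (∫ s in (0:ℝ)..T, ((X s)^2 : ℝ) ^ θ)
          ≤ θ * lam^(θ-1) * A + (1-θ)*lam^θ * T := by
        calc (∫ s in (0:ℝ)..T, ((X s)^2 : ℝ) ^ θ)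
            ≤ ∫ s in (0:ℝ)..T, (θ * lam^(θ-1) * (X s)^2 + (1-θ)*lam^θ) := by
              apply intervalIntegral.integral_mono_on hT.le hXθ
                ((hX2.const_mul _).add intervalIntegrable_const)
              intro s _
              exact tangent_rpow (sq_nonneg _) hlampos hθpos.le (by rw [hθdef]; linarith)
          _ = θ * lam^(θ-1) * A + (1-θ)*lam^θ * T := by
              rw [intervalIntegral.integral_add (hX2.const_mul _) intervalIntegrable_const,
                intervalIntegral.integral_const_mul, intervalIntegral.integral_const]
              simp [smul_eq_mul]
              ring
      have hTθ : (T:ℝ)^θ ≠ 0 := (Real.rpow_pos_of_pos hT θ).ne'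
      have h1 : lam ^ (θ-1) * A = T ^ (2*γ) * A ^ θ := by
        rw [hlam, Real.div_rpow hAnn hT.le, Real.rpow_sub hApos, Real.rpow_sub hT,
          Real.rpow_one, Real.rpow_one,
          show (2*γ) = 1 - θ by rw [hθdef]; ring, Real.rpow_sub hT, Real.rpow_one]
        field_simp
        ring_nf
        rw [show γ * 2 = 1 - θ by rw [hθdef]; ring]
      have h2 : lam ^ θ * T = T ^ (2*γ) * A ^ θ := by
        rw [hlam, Real.div_rpow hAnn hT.le,
          show (2*γ) = 1 - θ by rw [hθdef]; ring, Real.rpow_sub hT, Real.rpow_one]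
        field_simp
        ring_nf
        rw [show γ * 2 = 1 - θ by rw [hθdef]; ring]
      have hmono : A^θ ≤ Ψ^θ := Real.rpow_le_rpow hAnn hAΨ hθpos.le
      have hTpow : (0:ℝ) < T ^ (2*γ) := Real.rpow_pos_of_pos hT _
      calc (∫ s in (0:ℝ)..T, ((X s)^2 : ℝ) ^ θ)
          ≤ θ * lam^(θ-1) * A + (1-θ)*lam^θ * T := step
        _ = θ * (lam^(θ-1) * A) + (1-θ)*(lam^θ * T) := by ring
        _ = T ^ (2*γ) * A ^ θ := by rw [h1, h2]; ring
        _ ≤ T ^ (2*γ) * Ψ ^ θ := by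
            exact mul_le_mul_of_nonneg_left hmono hTpow.le
  -- bound on b(X T)^2
  have hXT : (X T)^2 ≤ Ψ := by rw [hΨ]; linarith
  have hbXT : (b (X T))^2 ≤ 2*(b 0)^2 + 2*c₁^2 * Ψ ^ (1-γ) := by
    set t := |X T| ^ (1-γ) with ht
    have h := hbound (X T)
    have habs : 0 ≤ t := Real.rpow_nonneg (abs_nonneg _) _
    have h1 : |b (X T)|^2 ≤ (|b 0| + c₁ * t)^2 := by
      apply pow_le_pow_left₀ (abs_nonneg _) h
    have h2 : (|b 0| + c₁ * t)^2 ≤ 2*(b 0)^2 + 2*c₁^2*t^2 := by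
      have hb0 : |b 0|^2 = (b 0)^2 := sq_abs (b 0)
      nlinarith [sq_nonneg (|b 0| - c₁ * t)]
    have h3 : t^2 = (((X T)^2 : ℝ)) ^ (1-γ) := sq_rpow _ _
    have hmono : (((X T)^2 : ℝ)) ^ (1-γ) ≤ Ψ ^ (1-γ) :=
      Real.rpow_le_rpow (sq_nonneg _) hXT h1γ.le
    have h4 : c₁^2 * t^2 ≤ c₁^2 * Ψ^(1-γ) := by
      rw [h3]; exact mul_le_mul_of_nonneg_left hmono (by positivity)
    have h0 : (b (X T))^2 = |b (X T)|^2 := (sq_abs _).symm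
    linarith
  -- integral bound
  have I1 : (∫ s in (0:ℝ)..T, (β' (X s))^2)
      ≤ 2*c₂^2*T + 2*c₃^2 * ∫ s in (0:ℝ)..T, ((X s)^2 : ℝ) ^ θ := by
    calc (∫ s in (0:ℝ)..T, (β' (X s))^2)
        ≤ ∫ s in (0:ℝ)..T, (2*c₂^2 + 2*c₃^2 * ((X s)^2 : ℝ) ^ θ) :=
          intervalIntegral.integral_mono_on hT.le hf hg (fun s _ => hβsq (X s))
      _ = 2*c₂^2*T + 2*c₃^2 * ∫ s in (0:ℝ)..T, ((X s)^2 : ℝ) ^ θ := by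
          rw [intervalIntegral.integral_add intervalIntegrable_const (hXθ.const_mul _),
            intervalIntegral.integral_const, intervalIntegral.integral_const_mul]
          simp [smul_eq_mul]
          ring
  -- final combination
  have h2c₃ : 2*c₃^2 * (∫ s in (0:ℝ)..T, ((X s)^2 : ℝ) ^ θ)
      ≤ 2*c₃^2 * (T ^ (2*γ) * Ψ ^ θ) :=
    mul_le_mul_of_nonneg_left hJ (by positivity)
  have hpos1 : (0:ℝ) ≤ c₃^2 * T := by positivity
  have hpos2 : (0:ℝ) ≤ c₃^2 * (T ^ (2*γ) * Ψ ^ θ) := by positivity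
  linarith [I1, hbXT, h2c₃, hpos1, hpos2]
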